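/- Let 𝒳 be a nonempty set, let h : 𝒳 × ℝ^m → ℝ be such that for every x ∈ 𝒳 the map ξ ↦ h(x,ξ) is L-Lipschitz, and let P and Q be Borel probability measures on ℝ^m with finite first moments under which every h(x,·) is integrable. If inf_{x∈𝒳} E_P[h(x,ξ)] is finite, then inf_{x∈𝒳} E_Q[h(x,ξ)] ≤ inf_{x∈𝒳} E_P[h(x,ξ)] + L · d_W(P, Q). -/

import Mathlib

open MeasureTheory

noncomputable section

abbrev Vec (m : ℕ) := EuclideanSpace ℝ (Fin m)

/-- A coupling of two Borel probability measures on `Vec m`. -/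
def IsCoupling {m : ℕ} (γ : Measure (Vec m × Vec m)) (P Q : Measure (Vec m)) : Prop :=
  IsProbabilityMeasure γ ∧ γ.map Prod.fst = P ∧ γ.map Prod.snd = Q

/-- Type-1 Wasserstein distance: infimum of `∫ ‖ξ₁ - ξ₂‖₂ dγ` over couplings `γ`. -/
noncomputable def wDist {m : ℕ} (P Q : Measure (Vec m)) : ℝ :=
  sInf {c : ℝ | ∃ γ : Measure (Vec m × Vec m), IsCoupling γ P Q ∧ c = ∫ p, ‖p.1 - p.2‖ ∂γ}

/-- `(x, k)` is RS-feasible for reference value `τ` with respect to `Phat`. -/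
def RSFeasible {m : ℕ} {X : Type*} (h : X → Vec m → ℝ)
    (Phat : Measure (Vec m)) (τ : ℝ) (x : X) (k : ℝ) : Prop :=
  0 ≤ k ∧ ∀ P : Measure (Vec m), IsProbabilityMeasure P →
    Integrable (fun ξ => ‖ξ‖) P → (∫ ξ, h x ξ ∂P) - τ ≤ k * wDist P Phat

/-- Empirical measure `(1/N) ∑ δ_{x i}`. -/
noncomputable def empMeas {m N : ℕ} (xs : Fin N → Vec m) : Measure (Vec m) :=
  (N : ENNReal)⁻¹ • ∑ i : Fin N, Measure.dirac (xs i)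


/-- if every h(x,.) is L-Lipschitz and integrable under P and Q, and
inf_x E_P[h(x,.)] is finite, then inf_x E_Q[h(x,.)] <= inf_x E_P[h(x,.)] + L d_W(P,Q). -/
theorem inf_expectation_le_inf_expectation_add_wasserstein
    {m : ℕ} {X : Type*} [Nonempty X]
    (h : X → Vec m → ℝ) (L : ℝ) (hL : 0 ≤ L)
    (hLip : ∀ x ξ η, |h x ξ - h x η| ≤ L * ‖ξ - η‖)
    (P Q : Measure (Vec m)) [IsProbabilityMeasure P] [IsProbabilityMeasure Q]
    (hPmom : Integrable (fun ξ => ‖ξ‖) P) (hQmom : Integrable (fun ξ => ‖ξ‖) Q)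
    (hIntP : ∀ x, Integrable (h x) P) (hIntQ : ∀ x, Integrable (h x) Q)
    (hfin : BddBelow (Set.range fun x => ∫ ξ, h x ξ ∂P)) :
    (⨅ x, ∫ ξ, h x ξ ∂Q) ≤ (⨅ x, ∫ ξ, h x ξ ∂P) + L * wDist P Q := by
  classical
  set S : Set ℝ := {c : ℝ | ∃ γ : Measure (Vec m × Vec m), IsCoupling γ P Q ∧
      c = ∫ p, ‖p.1 - p.2‖ ∂γ} with hS
  -- the set of coupling costs is nonempty (product coupling)
  have hSne : S.Nonempty := by
    refine ⟨∫ p, ‖p.1 - p.2‖ ∂(P.prod Q), P.prod Q, ⟨inferInstance, ?_, ?_⟩, rfl⟩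
    · simp [Measure.map_fst_prod]
    · simp [Measure.map_snd_prod]
  -- measurability of each h x
  have hmeas : ∀ x : X, Continuous (h x) := by
    intro x
    have : LipschitzWith ⟨L, hL⟩ (h x) := by
      apply LipschitzWith.of_dist_le_mul
      intro ξ η
      rw [Real.dist_eq, dist_eq_norm]; exact hLip x ξ η
    exact this.continuous
  have hW : wDist P Q = sInf S := rfl
  -- key estimate for each coupling cost c and each x
  have key : ∀ c ∈ S, ∀ x : X, |(∫ ξ, h x ξ ∂Q) - ∫ ξ, h x ξ ∂P| ≤ L * c := by
    rintro c ⟨γ, ⟨hγprob, hγ1, hγ2⟩, rfl⟩ x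
    haveI := hγprob
    have hfst : AEMeasurable (Prod.fst : Vec m × Vec m → Vec m) γ :=
      measurable_fst.aemeasurable
    have hsnd : AEMeasurable (Prod.snd : Vec m × Vec m → Vec m) γ :=
      measurable_snd.aemeasurable
    have hIQ : Integrable (fun p : Vec m × Vec m => h x p.2) γ := by
      have := hIntQ x; rw [← hγ2] at this
      exact (integrable_map_measure ((hmeas x).aestronglyMeasurable) hsnd).mp this
    have hIP : Integrable (fun p : Vec m × Vec m => h x p.1) γ := by
      have := hIntP x; rw [← hγ1] at this
      exact (integrable_map_measure ((hmeas x).aestronglyMeasurable) hfst).mp this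
    have hInorm : Integrable (fun p : Vec m × Vec m => ‖p.1 - p.2‖) γ := by
      have h1 : Integrable (fun p : Vec m × Vec m => ‖p.1‖) γ := by
        have := hPmom; rw [← hγ1] at this
        exact (integrable_map_measure
          (continuous_norm.aestronglyMeasurable) hfst).mp this
      have h2 : Integrable (fun p : Vec m × Vec m => ‖p.2‖) γ := by
        have := hQmom; rw [← hγ2] at this
        exact (integrable_map_measure
          (continuous_norm.aestronglyMeasurable) hsnd).mp this
      refine (h1.add h2).mono' ?_ ?_
      · exact (continuous_fst.sub continuous_snd).norm.aestronglyMeasurable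
      · filter_upwards with p
        simp only [Real.norm_eq_abs, abs_norm]
        exact norm_sub_le _ _
    have hQint : ∫ ξ, h x ξ ∂Q = ∫ p, h x p.2 ∂γ := by
      rw [← hγ2, integral_map hsnd ((hmeas x).aestronglyMeasurable)]
    have hPint : ∫ ξ, h x ξ ∂P = ∫ p, h x p.1 ∂γ := by
      rw [← hγ1, integral_map hfst ((hmeas x).aestronglyMeasurable)]
    have hdiff : (∫ ξ, h x ξ ∂Q) - (∫ ξ, h x ξ ∂P)
        = ∫ p, (h x p.2 - h x p.1) ∂γ := by
      rw [hQint, hPint, integral_sub hIQ hIP]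
    rw [hdiff]
    calc |∫ p, (h x p.2 - h x p.1) ∂γ| ≤ ∫ p, |h x p.2 - h x p.1| ∂γ := by
          simpa [Real.norm_eq_abs] using norm_integral_le_integral_norm
            (fun p : Vec m × Vec m => h x p.2 - h x p.1) (μ := γ)
      _ ≤ ∫ p, L * ‖p.1 - p.2‖ ∂γ := by
          apply integral_mono (hIQ.sub hIP).abs (hInorm.const_mul L)
          intro p
          calc |h x p.2 - h x p.1| ≤ L * ‖p.2 - p.1‖ := hLip x p.2 p.1
            _ = L * ‖p.1 - p.2‖ := by rw [norm_sub_rev]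
      _ = L * ∫ p, ‖p.1 - p.2‖ ∂γ := integral_const_mul _ _
  -- conclude
  have hQbdd : BddBelow (Set.range fun x => ∫ ξ, h x ξ ∂Q) := by
    obtain ⟨c, hc⟩ := hSne
    obtain ⟨b, hb⟩ := hfin
    refine ⟨b - L * c, ?_⟩
    rintro v ⟨x, rfl⟩
    have h1 := key c hc x
    have h2 : b ≤ ∫ ξ, h x ξ ∂P := hb ⟨x, rfl⟩
    have h3 := abs_le.mp h1
    simp only at h2 ⊢
    linarith [h3.1]
  have main : ∀ c ∈ S, (⨅ x, ∫ ξ, h x ξ ∂Q) ≤ (⨅ x, ∫ ξ, h x ξ ∂P) + L * c := by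
    intro c hc
    have hstep : (⨅ x, ∫ ξ, h x ξ ∂Q) - L * c ≤ ⨅ x, ∫ ξ, h x ξ ∂P := by
      refine le_ciInf fun x => ?_
      have h1 := ciInf_le hQbdd x
      have h2 := (abs_le.mp (key c hc x)).2
      linarith
    linarith
  rcases eq_or_lt_of_le hL with hL0 | hL0
  · obtain ⟨c0, hc0⟩ := hSne
    have := main c0 hc0
    simp only [← hL0, zero_mul] at this ⊢
    simpa using this
  · rw [← sub_le_iff_le_add', hW, mul_comm, ← div_le_iff₀ hL0]
    refine le_csInf hSne fun c hc => ?_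
    rw [div_le_iff₀ hL0, mul_comm]
    rw [sub_le_iff_le_add']
    exact main c hc
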